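/- arXiv:2407.14870 — 2 statements merged into one kernel-verified Lean document; each statement's English description precedes it below -/
import Mathlib

section
/- Let ψ be an Orlicz function and φ an Orlicz function with φ ∈ C⁰_{ψ,1} (the closed convex hull in C[0,1] of the functions t ↦ ψ(st)/ψ(s), 0 < s < 1). Then the Matuszewska–Orlicz indices at zero satisfy α⁰_ψ ≤ α⁰_φ ≤ β⁰_φ ≤ β⁰_ψ. -/
open Set

/-- An Orlicz function: increasing, convex, continuous on `[0,∞)`, vanishing at `0`. -/
def IsOrlicz (M : ℝ → ℝ) : Prop :=
  StrictMonoOn M (Ici (0:ℝ)) ∧ ConvexOn ℝ (Ici (0:ℝ)) M ∧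
    ContinuousOn M (Ici (0:ℝ)) ∧ M 0 = 0

/-- The Matuszewska–Orlicz index `α⁰_ψ` at zero. -/
noncomputable def alphaZero (ψ : ℝ → ℝ) : ℝ :=
  sSup {p : ℝ | ∃ C : ℝ, 0 < C ∧
    ∀ s ∈ Ioc (0:ℝ) 1, ∀ t ∈ Ioc (0:ℝ) 1, ψ (s * t) ≤ C * s ^ p * ψ t}

/-- The Matuszewska–Orlicz index `β⁰_ψ` at zero. -/
noncomputable def betaZero (ψ : ℝ → ℝ) : ℝ :=
  sInf {p : ℝ | ∃ c : ℝ, 0 < c ∧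
    ∀ s ∈ Ioc (0:ℝ) 1, ∀ t ∈ Ioc (0:ℝ) 1, c * s ^ p * ψ t ≤ ψ (s * t)}

/-- The set `E⁰_{ψ,1}` of normalized dilations `t ↦ ψ(st)/ψ(s)`, `0 < s < 1`,
viewed inside `C[0,1]`. -/
def EZero (ψ : ℝ → ℝ) : Set C(Icc (0:ℝ) 1, ℝ) :=
  {g | ∃ s : ℝ, 0 < s ∧ s < 1 ∧ ∀ t : Icc (0:ℝ) 1, g t = ψ (s * t) / ψ s}

/-- Closed-halfspace transfer: upper direction. -/
lemma my_transfer_le (ψ : ℝ → ℝ) {g0 : C(Icc (0:ℝ) 1, ℝ)}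
    (hmem : g0 ∈ closure (convexHull ℝ (closure (EZero ψ))))
    (a b : Icc (0:ℝ) 1) (r : ℝ) (h : ∀ g ∈ EZero ψ, g a ≤ r * g b) :
    g0 a ≤ r * g0 b := by
  set S : Set C(Icc (0:ℝ) 1, ℝ) := {g | g a ≤ r * g b} with hS
  have hclosed : IsClosed S := by
    have hc : Continuous fun g : C(Icc (0:ℝ) 1, ℝ) => r * g b - g a :=
      Continuous.sub (continuous_const.mul (ContinuousEvalConst.continuous_eval_const b))
        (ContinuousEvalConst.continuous_eval_const a)
    have : S = (fun g : C(Icc (0:ℝ) 1, ℝ) => r * g b - g a) ⁻¹' Ici 0 := by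
      ext g; simp [hS, sub_nonneg]
    rw [this]
    exact IsClosed.preimage hc isClosed_Ici
  have hconv : Convex ℝ S := by
    intro g1 hg1 g2 hg2 α β hα hβ hαβ
    simp only [hS, mem_setOf_eq] at hg1 hg2 ⊢
    have e1 : (α • g1 + β • g2) a = α * g1 a + β * g2 a := by simp [ContinuousMap.add_apply]
    have e2 : (α • g1 + β • g2) b = α * g1 b + β * g2 b := by simp [ContinuousMap.add_apply]
    rw [e1, e2]
    nlinarith [mul_le_mul_of_nonneg_left hg1 hα, mul_le_mul_of_nonneg_left hg2 hβ]
  have hsub : closure (convexHull ℝ (closure (EZero ψ))) ⊆ S :=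
    closure_minimal (convexHull_min (closure_minimal h hclosed) hconv) hclosed
  exact hsub hmem

/-- Closed-halfspace transfer: lower direction. -/
lemma my_transfer_ge (ψ : ℝ → ℝ) {g0 : C(Icc (0:ℝ) 1, ℝ)}
    (hmem : g0 ∈ closure (convexHull ℝ (closure (EZero ψ))))
    (a b : Icc (0:ℝ) 1) (r : ℝ) (h : ∀ g ∈ EZero ψ, r * g b ≤ g a) :
    r * g0 b ≤ g0 a := by
  set S : Set C(Icc (0:ℝ) 1, ℝ) := {g | r * g b ≤ g a} with hS
  have hclosed : IsClosed S := by
    have hc : Continuous fun g : C(Icc (0:ℝ) 1, ℝ) => g a - r * g b :=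
      Continuous.sub (ContinuousEvalConst.continuous_eval_const a)
        (continuous_const.mul (ContinuousEvalConst.continuous_eval_const b))
    have : S = (fun g : C(Icc (0:ℝ) 1, ℝ) => g a - r * g b) ⁻¹' Ici 0 := by
      ext g; simp [hS, sub_nonneg]
    rw [this]
    exact IsClosed.preimage hc isClosed_Ici
  have hconv : Convex ℝ S := by
    intro g1 hg1 g2 hg2 α β hα hβ hαβ
    simp only [hS, mem_setOf_eq] at hg1 hg2 ⊢
    have e1 : (α • g1 + β • g2) a = α * g1 a + β * g2 a := by simp [ContinuousMap.add_apply]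
    have e2 : (α • g1 + β • g2) b = α * g1 b + β * g2 b := by simp [ContinuousMap.add_apply]
    rw [e1, e2]
    nlinarith [mul_le_mul_of_nonneg_left hg1 hα, mul_le_mul_of_nonneg_left hg2 hβ]
  have hsub : closure (convexHull ℝ (closure (EZero ψ))) ⊆ S :=
    closure_minimal (convexHull_min (closure_minimal h hclosed) hconv) hclosed
  exact hsub hmem

/-- Cross comparison: any exponent in the α-set is ≤ any in the β-set. -/
lemma my_cross_le (f : ℝ → ℝ) (hf1 : f 1 = 1) {p q C c : ℝ} (hC : 0 < C) (hc : 0 < c)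
    (hA : ∀ s ∈ Ioc (0:ℝ) 1, ∀ t ∈ Ioc (0:ℝ) 1, f (s * t) ≤ C * s ^ p * f t)
    (hB : ∀ s ∈ Ioc (0:ℝ) 1, ∀ t ∈ Ioc (0:ℝ) 1, c * s ^ q * f t ≤ f (s * t)) :
    p ≤ q := by
  have H : ∀ s ∈ Ioc (0:ℝ) 1, c * s ^ q ≤ C * s ^ p := by
    intro s hs
    have h1 := hA s hs 1 ⟨one_pos, le_refl 1⟩
    have h2 := hB s hs 1 ⟨one_pos, le_refl 1⟩
    rw [mul_one, hf1, mul_one] at h1 h2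
    linarith
  by_contra hpq
  push_neg at hpq
  set ε := p - q with hε
  have hεpos : 0 < ε := by simp [hε]; linarith
  have hcC : c ≤ C := by
    have := H 1 ⟨one_pos, le_refl 1⟩
    simpa using this
  have hbase : (0:ℝ) < c / (2 * C) := by positivity
  have hbase1 : c / (2 * C) < 1 := by
    rw [div_lt_one (by positivity)]; linarith
  set s := (c / (2 * C)) ^ (1 / ε) with hsdef
  have hspos : 0 < s := Real.rpow_pos_of_pos hbase _
  have hs1 : s ≤ 1 := Real.rpow_le_one hbase.le hbase1.le (by positivity)
  have hse : s ^ ε = c / (2 * C) := by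
    rw [hsdef, ← Real.rpow_mul hbase.le, one_div, inv_mul_cancel₀ hεpos.ne', Real.rpow_one]
  have hsp : s ^ p = s ^ q * s ^ ε := by
    rw [← Real.rpow_add hspos]; congr 1; simp [hε]
  have hHs := H s ⟨hspos, hs1⟩
  rw [hsp, hse] at hHs
  have hsq : 0 < s ^ q := Real.rpow_pos_of_pos hspos q
  have : C * (s ^ q * (c / (2 * C))) = s ^ q * (c / 2) := by field_simp
  rw [this] at hHs
  nlinarith

/-- Δ₂ at zero gives a power-type lower estimate. -/
lemma my_delta2_lower (ψ : ℝ → ℝ) (hmono : StrictMonoOn ψ (Ici (0:ℝ))) (hψ0 : ψ 0 = 0)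
    (hΔ : ∃ K : ℝ, ∀ u : ℝ, 0 < u → u ≤ 1 → ψ (2 * u) ≤ K * ψ u) :
    ∃ q c : ℝ, 0 < c ∧
      ∀ s ∈ Ioc (0:ℝ) 1, ∀ t ∈ Ioc (0:ℝ) 1, c * s ^ q * ψ t ≤ ψ (s * t) := by
  obtain ⟨K0, hK0⟩ := hΔ
  set K := max K0 2 with hKdef
  have hK2 : (2:ℝ) ≤ K := le_max_right _ _
  have hKpos : (0:ℝ) < K := by linarith
  have hψnn : ∀ u : ℝ, 0 ≤ u → 0 ≤ ψ u := by
    intro u hu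
    rcases eq_or_lt_of_le hu with h | h
    · rw [← h, hψ0]
    · rw [← hψ0]; exact (hmono self_mem_Ici hu h).le
  have hK : ∀ u : ℝ, 0 < u → u ≤ 1 → ψ (2 * u) ≤ K * ψ u := by
    intro u hu hu1
    calc ψ (2 * u) ≤ K0 * ψ u := hK0 u hu hu1
      _ ≤ K * ψ u := mul_le_mul_of_nonneg_right (le_max_left _ _) (hψnn u hu.le)
  have step : ∀ n : ℕ, ∀ t ∈ Ioc (0:ℝ) 1, ψ t ≤ K ^ n * ψ (t / 2 ^ n) := by
    intro n
    induction n with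
    | zero => intro t ht; simp
    | succ n ih =>
      intro t ht
      have h2n : (0:ℝ) < 2 ^ (n+1) := by positivity
      have hu : 0 < t / 2 ^ (n+1) := div_pos ht.1 h2n
      have hu1 : t / 2 ^ (n+1) ≤ 1 := by
        rw [div_le_one h2n]
        calc t ≤ 1 := ht.2
          _ ≤ 2 ^ (n+1) := one_le_pow₀ one_le_two
      have heq : t / 2 ^ n = 2 * (t / 2 ^ (n+1)) := by
        field_simp; ring
      calc ψ t ≤ K ^ n * ψ (t / 2 ^ n) := ih t ht
        _ = K ^ n * ψ (2 * (t / 2 ^ (n+1))) := by rw [heq]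
        _ ≤ K ^ n * (K * ψ (t / 2 ^ (n+1))) :=
            mul_le_mul_of_nonneg_left (hK _ hu hu1) (pow_pos hKpos n).le
        _ = K ^ (n+1) * ψ (t / 2 ^ (n+1)) := by ring
  refine ⟨Real.logb 2 K, 1 / K, by positivity, ?_⟩
  intro s hs t ht
  set x := Real.logb 2 (1 / s) with hxdef
  have hs1 : (1:ℝ) ≤ 1 / s := one_le_one_div hs.1 hs.2
  have hx0 : 0 ≤ x := Real.logb_nonneg one_lt_two hs1
  set n := ⌈x⌉₊ with hndef
  have h2n : 1 / s ≤ 2 ^ n := by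
    have h1 : (1:ℝ) / s = 2 ^ x := (Real.rpow_logb two_pos (by norm_num) (by positivity)).symm
    have h2 : (2:ℝ) ^ x ≤ 2 ^ (n:ℝ) :=
      Real.rpow_le_rpow_of_exponent_le one_le_two (Nat.le_ceil x)
    rw [h1, ← Real.rpow_natCast 2 n]
    exact h2
  have hle : t / 2 ^ n ≤ s * t := by
    rw [div_le_iff₀ (by positivity)]
    have h6 : 1 ≤ s * 2 ^ n := by
      rw [div_le_iff₀ hs.1] at h2n
      linarith [h2n]
    nlinarith [ht.1.le, h6]
  have hmem1 : t / 2 ^ n ∈ Ici (0:ℝ) := by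
    have : (0:ℝ) < 2 ^ n := by positivity
    exact mem_Ici.mpr (le_of_lt (div_pos ht.1 this))
  have hmem2 : s * t ∈ Ici (0:ℝ) := mem_Ici.mpr (mul_nonneg hs.1.le ht.1.le)
  have hchain : ψ t ≤ K ^ n * ψ (s * t) := by
    calc ψ t ≤ K ^ n * ψ (t / 2 ^ n) := step n t ht
      _ ≤ K ^ n * ψ (s * t) :=
        mul_le_mul_of_nonneg_left (hmono.monotoneOn hmem1 hmem2 hle) (pow_pos hKpos n).le
  have hq : s ^ Real.logb 2 K * K ^ n ≤ K := by
    have hn1 : (n:ℝ) ≤ x + 1 := (Nat.ceil_lt_add_one hx0).le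
    have h1 : (K:ℝ) ^ (n:ℝ) ≤ K ^ (x + 1) :=
      Real.rpow_le_rpow_of_exponent_le (by linarith) hn1
    have h2 : K ^ (x + 1) = K * K ^ x := by
      rw [Real.rpow_add hKpos, Real.rpow_one]; ring
    have h3 : K ^ x = (1 / s) ^ Real.logb 2 K := by
      rw [Real.rpow_def_of_pos hKpos, Real.rpow_def_of_pos (by positivity : (0:ℝ) < 1 / s),
        hxdef, Real.logb, Real.logb]
      congr 1
      ring
    have hsqpos : 0 < s ^ Real.logb 2 K := Real.rpow_pos_of_pos hs.1 _
    have h4 : s ^ Real.logb 2 K * (1 / s) ^ Real.logb 2 K = 1 := by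
      rw [one_div, Real.inv_rpow hs.1.le, mul_inv_cancel₀ (ne_of_gt hsqpos)]
    calc s ^ Real.logb 2 K * K ^ n = s ^ Real.logb 2 K * K ^ (n:ℝ) := by
          rw [Real.rpow_natCast]
      _ ≤ s ^ Real.logb 2 K * (K * K ^ x) := by
          rw [← h2]; exact mul_le_mul_of_nonneg_left h1 hsqpos.le
      _ = K * (s ^ Real.logb 2 K * (1 / s) ^ Real.logb 2 K) := by rw [h3]; ring
      _ = K := by rw [h4, mul_one]
  have hsq : 0 < s ^ Real.logb 2 K := Real.rpow_pos_of_pos hs.1 _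
  have hKn : (0:ℝ) < K ^ n := pow_pos hKpos n
  have hst : 0 ≤ ψ (s * t) := hψnn _ (mul_nonneg hs.1.le ht.1.le)
  have h5 : s ^ Real.logb 2 K * ψ t ≤ K * ψ (s * t) := by
    calc s ^ Real.logb 2 K * ψ t ≤ s ^ Real.logb 2 K * (K ^ n * ψ (s * t)) :=
          mul_le_mul_of_nonneg_left hchain hsq.le
      _ = (s ^ Real.logb 2 K * K ^ n) * ψ (s * t) := by ring
      _ ≤ K * ψ (s * t) := mul_le_mul_of_nonneg_right hq hst
  rw [div_mul_eq_mul_div, div_mul_eq_mul_div, div_le_iff₀ hKpos, one_mul]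
  linarith [h5]

/-- If `ψ`, `φ` are Orlicz functions and `φ ∈ C⁰_{ψ,1}` (the closed convex hull in
`C[0,1]` of the normalized dilations of `ψ`), then
`α⁰_ψ ≤ α⁰_φ ≤ β⁰_φ ≤ β⁰_ψ`. -/
theorem stmt9 (ψ φ : ℝ → ℝ)
    (hψ : IsOrlicz ψ) (hφ : IsOrlicz φ) (hψ1 : ψ 1 = 1) (hφ1 : φ 1 = 1)
    (hψΔ2 : ∃ K : ℝ, ∀ u : ℝ, 0 < u → u ≤ 1 → ψ (2 * u) ≤ K * ψ u)
    (hφc : Continuous fun t : Icc (0:ℝ) 1 => φ t)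
    (hmem : (⟨fun t : Icc (0:ℝ) 1 => φ t, hφc⟩ : C(Icc (0:ℝ) 1, ℝ)) ∈
      closure (convexHull ℝ (closure (EZero ψ)))) :
    alphaZero ψ ≤ alphaZero φ ∧ alphaZero φ ≤ betaZero φ ∧ betaZero φ ≤ betaZero ψ := by
  obtain ⟨hψm, hψcv, hψct, hψ0⟩ := hψ
  obtain ⟨hφm, hφcv, hφct, hφ0⟩ := hφ
  set Aψ := {p : ℝ | ∃ C : ℝ, 0 < C ∧
    ∀ s ∈ Ioc (0:ℝ) 1, ∀ t ∈ Ioc (0:ℝ) 1, ψ (s * t) ≤ C * s ^ p * ψ t} with hAψ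
  set Aφ := {p : ℝ | ∃ C : ℝ, 0 < C ∧
    ∀ s ∈ Ioc (0:ℝ) 1, ∀ t ∈ Ioc (0:ℝ) 1, φ (s * t) ≤ C * s ^ p * φ t} with hAφ
  set Bψ := {p : ℝ | ∃ c : ℝ, 0 < c ∧
    ∀ s ∈ Ioc (0:ℝ) 1, ∀ t ∈ Ioc (0:ℝ) 1, c * s ^ p * ψ t ≤ ψ (s * t)} with hBψ
  set Bφ := {p : ℝ | ∃ c : ℝ, 0 < c ∧
    ∀ s ∈ Ioc (0:ℝ) 1, ∀ t ∈ Ioc (0:ℝ) 1, c * s ^ p * φ t ≤ φ (s * t)} with hBφ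
  -- positivity of ψ on (0, ∞)
  have hψpos : ∀ u : ℝ, 0 < u → 0 < ψ u := by
    intro u hu
    rw [← hψ0]; exact hψm self_mem_Ici (le_of_lt hu) hu
  -- subtype memberships
  have hmemIcc : ∀ s t : ℝ, s ∈ Ioc (0:ℝ) 1 → t ∈ Ioc (0:ℝ) 1 → s * t ∈ Icc (0:ℝ) 1 :=
    fun s t hs ht => ⟨(mul_pos hs.1 ht.1).le, mul_le_one₀ hs.2 ht.1.le ht.2⟩
  -- transfer of the α-inequality from ψ to φ
  have hAsub : Aψ ⊆ Aφ := by
    rintro p ⟨C, hC, h⟩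
    refine ⟨C, hC, ?_⟩
    intro s hs t ht
    have key := my_transfer_le ψ hmem ⟨s * t, hmemIcc s t hs ht⟩ ⟨t, ⟨ht.1.le, ht.2⟩⟩
      (C * s ^ p) ?_
    · simpa using key
    · rintro g ⟨s0, hs0, hs01, hg⟩
      have hψs0 : 0 < ψ s0 := hψpos s0 hs0
      have hkey : ψ (s0 * (s * t)) ≤ C * s ^ p * ψ (s0 * t) := by
        rw [show s0 * (s * t) = s * (s0 * t) by ring]
        exact h s hs (s0 * t) ⟨mul_pos hs0 ht.1, mul_le_one₀ hs01.le ht.1.le ht.2⟩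
      have e1 := hg ⟨s * t, hmemIcc s t hs ht⟩
      have e2 := hg ⟨t, ⟨ht.1.le, ht.2⟩⟩
      rw [e1, e2]
      rw [← mul_div_assoc]
      exact div_le_div_of_nonneg_right hkey hψs0.le
  -- transfer of the β-inequality from ψ to φ
  have hBsub : Bψ ⊆ Bφ := by
    rintro p ⟨c, hc, h⟩
    refine ⟨c, hc, ?_⟩
    intro s hs t ht
    have key := my_transfer_ge ψ hmem ⟨s * t, hmemIcc s t hs ht⟩ ⟨t, ⟨ht.1.le, ht.2⟩⟩
      (c * s ^ p) ?_
    · simpa using key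
    · rintro g ⟨s0, hs0, hs01, hg⟩
      have hψs0 : 0 < ψ s0 := hψpos s0 hs0
      have hkey : c * s ^ p * ψ (s0 * t) ≤ ψ (s0 * (s * t)) := by
        rw [show s0 * (s * t) = s * (s0 * t) by ring]
        exact h s hs (s0 * t) ⟨mul_pos hs0 ht.1, mul_le_one₀ hs01.le ht.1.le ht.2⟩
      have e1 := hg ⟨s * t, hmemIcc s t hs ht⟩
      have e2 := hg ⟨t, ⟨ht.1.le, ht.2⟩⟩
      rw [e1, e2]
      rw [← mul_div_assoc]
      exact div_le_div_of_nonneg_right hkey hψs0.le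
  -- 0 belongs to the α-sets
  have hzeroA : ∀ f : ℝ → ℝ, StrictMonoOn f (Ici (0:ℝ)) → (0:ℝ) ∈
      {p : ℝ | ∃ C : ℝ, 0 < C ∧
        ∀ s ∈ Ioc (0:ℝ) 1, ∀ t ∈ Ioc (0:ℝ) 1, f (s * t) ≤ C * s ^ p * f t} := by
    intro f hf
    refine ⟨1, one_pos, ?_⟩
    intro s hs t ht
    rw [Real.rpow_zero, mul_one, one_mul]
    exact hf.monotoneOn (mem_Ici.mpr (mul_nonneg hs.1.le ht.1.le))
      (mem_Ici.mpr ht.1.le) (mul_le_of_le_one_left ht.1.le hs.2)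
  have h0Aψ : (0:ℝ) ∈ Aψ := hzeroA ψ hψm
  have h0Aφ : (0:ℝ) ∈ Aφ := hzeroA φ hφm
  -- Bψ nonempty via Δ₂
  obtain ⟨q0, c0, hc0, hq0⟩ := my_delta2_lower ψ hψm hψ0 hψΔ2
  have hq0Bψ : q0 ∈ Bψ := ⟨c0, hc0, hq0⟩
  have hq0Bφ : q0 ∈ Bφ := hBsub hq0Bψ
  -- cross comparisons for φ
  have hcross : ∀ p ∈ Aφ, ∀ q ∈ Bφ, p ≤ q := by
    rintro p ⟨C, hC, hA⟩ q ⟨c, hc, hB⟩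
    exact my_cross_le φ hφ1 hC hc hA hB
  have hAφbdd : BddAbove Aφ := ⟨q0, fun p hp => hcross p hp q0 hq0Bφ⟩
  have hBφbdd : BddBelow Bφ := ⟨0, fun q hq => hcross 0 h0Aφ q hq⟩
  refine ⟨?_, ?_, ?_⟩
  · exact csSup_le_csSup hAφbdd ⟨0, h0Aψ⟩ hAsub
  · exact csSup_le ⟨0, h0Aφ⟩ fun p hp => le_csInf ⟨q0, hq0Bφ⟩ fun q hq => hcross p hp q hq
  · exact csInf_le_csInf hBφbdd ⟨q0, hq0Bψ⟩ hBsub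
end

section
/- Let 1 < p < 2, f(t) = t^{−1/p} ln^{−3/(2p)}(e/t) for 0 < t ≤ 1. Then: (1/t)∫₀ᵗ f(s)^p ds ≍ 1/(t ln^{1/2}(e/t)) for 0 < t ≤ 1; (1/t)∫₀ᵗ f(s) ds ≍ 1/(t^{1/p} ln^{3/(2p)}(e/t)) for 0 < t ≤ 1; and (1/t)∫ₜ¹ f(s)² ds ≍ 1/(t^{2/p} ln^{3/p}(e/t)) for 0 < t ≤ 1/2, with equivalence constants depending only on p. -/
open MeasureTheory Set Real Filter Topology


lemma logE {s : ℝ} (hs : 0 < s) : Real.log (Real.exp 1 / s) = 1 - Real.log s := by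
  rw [Real.log_div (Real.exp_ne_zero 1) hs.ne', Real.log_exp]

lemma aux1 {t : ℝ} (ht : 0 < t) (ht1 : t ≤ 1) :
    ∫ s in Ioc (0:ℝ) t, s⁻¹ * (1 - Real.log s) ^ (-(3/2) : ℝ)
      = 2 * (1 - Real.log t) ^ (-(1/2) : ℝ) := by
  set G : ℝ → ℝ := fun s => if s = 0 then 0 else 2 * (1 - Real.log s) ^ (-(1/2):ℝ) with hG
  set G' : ℝ → ℝ := fun s => s⁻¹ * (1 - Real.log s) ^ (-(3/2) : ℝ) with hG'
  have hderiv : ∀ x ∈ Ioo (0:ℝ) t, HasDerivAt G (G' x) x := by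
    intro x hx
    have hx0 : (0:ℝ) < x := hx.1
    have hlx : Real.log x ≤ 0 := Real.log_nonpos hx0.le (hx.2.le.trans ht1)
    have hb : (0:ℝ) < 1 - Real.log x := by linarith
    have h1 : HasDerivAt (fun s : ℝ => 1 - Real.log s) (-x⁻¹) x := by
      simpa using (Real.hasDerivAt_log hx0.ne').const_sub 1
    have h2 := (h1.rpow_const (p := (-(1/2):ℝ)) (Or.inl hb.ne')).const_mul (2:ℝ)
    have h3 : HasDerivAt G (2 * (-x⁻¹ * (-(1/2)) * (1 - Real.log x) ^ ((-(1/2):ℝ) - 1))) x := by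
      apply h2.congr_of_eventuallyEq
      filter_upwards [eventually_ne_nhds hx0.ne'] with y hy
      simp [hG, hy]
    convert h3 using 1
    have he : ((-(1/2):ℝ) - 1) = (-(3/2):ℝ) := by norm_num
    rw [he]; simp [hG']; ring
  have hpos : ∀ x ∈ Ioo (0:ℝ) t, 0 ≤ G' x := by
    intro x hx
    have hx0 : (0:ℝ) < x := hx.1
    have hlx : Real.log x ≤ 0 := Real.log_nonpos hx0.le (hx.2.le.trans ht1)
    have hb : (0:ℝ) < 1 - Real.log x := by linarith
    have hGx : G' x = x⁻¹ * (1 - Real.log x) ^ (-(3/2) : ℝ) := rfl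
    rw [hGx]; positivity
  have hcont : ContinuousOn G (Icc 0 t) := by
    intro x hx
    rcases eq_or_lt_of_le hx.1 with h0 | h0
    · subst h0
      have hGz : G 0 = 0 := by simp [hG]
      rw [ContinuousWithinAt, hGz]
      have hle : 𝓝[Icc (0:ℝ) t] 0 ≤ 𝓝[insert (0:ℝ) (Ioi 0)] 0 := by
        apply nhdsWithin_mono
        intro y hy
        rcases eq_or_lt_of_le hy.1 with h | h
        · exact Or.inl h.symm
        · exact Or.inr h
      rw [nhdsWithin_insert] at hle
      refine Tendsto.mono_left ?_ hle
      rw [Filter.tendsto_sup]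
      refine ⟨by simpa [hGz] using tendsto_pure_nhds G 0, ?_⟩
      have h1 : Tendsto (fun y : ℝ => 1 - Real.log y) (𝓝[>] (0:ℝ)) atTop := by
        have := Filter.tendsto_neg_atBot_atTop.comp Real.tendsto_log_nhdsGT_zero
        have h2 := tendsto_atTop_add_const_left _ (1:ℝ) this
        refine h2.congr (fun y => ?_)
        simp [sub_eq_add_neg]
      have h2 : Tendsto (fun y:ℝ => 2 * (1 - Real.log y) ^ (-(1/2):ℝ)) (𝓝[>](0:ℝ)) (𝓝 0) := by
        have := ((tendsto_rpow_neg_atTop (by norm_num : (0:ℝ) < 1/2)).comp h1).const_mul (2:ℝ)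
        simpa using this
      refine Tendsto.congr' ?_ h2
      filter_upwards [self_mem_nhdsWithin] with y hy
      simp [hG, (show (0:ℝ) < y from hy).ne']
    · have hx0 : (0:ℝ) < x := h0
      have hlx : Real.log x ≤ 0 := Real.log_nonpos hx0.le (hx.2.trans ht1)
      have hb : (0:ℝ) < 1 - Real.log x := by linarith
      have c1 : ContinuousAt (fun s : ℝ => 1 - Real.log s) x :=
        continuousAt_const.sub (Real.continuousAt_log hx0.ne')
      have c2 : ContinuousAt (fun s : ℝ => 2 * (1 - Real.log s) ^ (-(1/2):ℝ)) x :=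
        ((c1.rpow_const (Or.inl hb.ne')).const_mul 2)
      have : ContinuousAt G x := by
        apply c2.congr
        filter_upwards [eventually_ne_nhds hx0.ne'] with y hy
        simp [hG, hy]
      exact this.continuousWithinAt
  have hint : IntegrableOn G' (Ioc 0 t) :=
    intervalIntegral.integrableOn_deriv_of_nonneg hcont hderiv hpos
  have hII : IntervalIntegrable G' volume 0 t :=
    ⟨hint, by simp [Set.Ioc_eq_empty (not_lt.2 ht.le), integrableOn_empty]⟩
  have hFTC := intervalIntegral.integral_eq_sub_of_hasDeriv_right_of_le ht.le hcont
    (fun x hx => (hderiv x hx).hasDerivWithinAt) hII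
  rw [intervalIntegral.integral_of_le ht.le] at hFTC
  rw [hFTC]
  have hGt : G t = 2 * (1 - Real.log t) ^ (-(1/2):ℝ) := by simp [hG, ht.ne']
  have hG0 : G 0 = 0 := by simp [hG]
  rw [hGt, hG0, sub_zero]

lemma part1 {p t : ℝ} (hp1 : 1 < p) (ht : 0 < t) (ht1 : t ≤ 1) :
    (1 / t) * (∫ s in Ioc (0:ℝ) t,
        (s ^ (-(1/p)) * Real.log (Real.exp 1 / s) ^ (-(3/(2*p)))) ^ p)
      = 2 * (1 / (t * Real.log (Real.exp 1 / t) ^ ((1:ℝ)/2))) := by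
  have hp0 : p ≠ 0 := by positivity
  have hcong : ∫ s in Ioc (0:ℝ) t,
      (s ^ (-(1/p)) * Real.log (Real.exp 1 / s) ^ (-(3/(2*p)))) ^ p
      = ∫ s in Ioc (0:ℝ) t, s⁻¹ * (1 - Real.log s) ^ (-(3/2) : ℝ) := by
    apply setIntegral_congr_fun measurableSet_Ioc
    intro s hs
    have hs0 : (0:ℝ) < s := hs.1
    have hls : Real.log s ≤ 0 := Real.log_nonpos hs0.le (hs.2.trans ht1)
    have hb : (0:ℝ) ≤ 1 - Real.log s := by linarith
    dsimp only
    rw [logE hs0, Real.mul_rpow (Real.rpow_nonneg hs0.le _) (Real.rpow_nonneg hb _),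
      ← Real.rpow_mul hs0.le, ← Real.rpow_mul hb]
    have e1 : (-(1/p)) * p = (-1 : ℝ) := by field_simp
    have e2 : (-(3/(2*p))) * p = (-(3/2) : ℝ) := by field_simp
    rw [e1, e2, Real.rpow_neg_one]
  rw [hcong, aux1 ht ht1, logE ht]
  have hlt : Real.log t ≤ 0 := Real.log_nonpos ht.le ht1
  have hb : (0:ℝ) < 1 - Real.log t := by linarith
  rw [show (-(1/2) : ℝ) = -(1/2) from rfl, Real.rpow_neg hb.le]
  have h2 : (0:ℝ) < (1 - Real.log t) ^ ((1:ℝ)/2) := Real.rpow_pos_of_pos hb _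
  field_simp

lemma f2_integrable {p t : ℝ} (hp1 : 1 < p) (ht : 0 < t) (ht1 : t ≤ 1) :
    IntegrableOn (fun s : ℝ => s ^ (-(1/p)) * Real.log (Real.exp 1 / s) ^ (-(3/(2*p))))
      (Ioc 0 t) := by
  have hp0 : (0:ℝ) < p := by linarith
  have hexp : (-1 : ℝ) < -(1/p) := by
    have : 1/p < 1 := by rw [div_lt_one hp0]; exact hp1
    linarith
  have hg : IntegrableOn (fun s : ℝ => s ^ (-(1/p))) (Ioc 0 t) :=
    (intervalIntegral.intervalIntegrable_rpow' hexp).1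
  have hmeas : Measurable (fun s : ℝ => s ^ (-(1/p)) * Real.log (Real.exp 1 / s) ^ (-(3/(2*p)))) := by
    exact (measurable_id.pow measurable_const).mul
      (((measurable_const.div measurable_id).log).pow measurable_const)
  apply hg.mono' (hmeas.aestronglyMeasurable.restrict)
  rw [ae_restrict_iff' measurableSet_Ioc]
  apply ae_of_all
  intro s hs
  have hs0 : (0:ℝ) < s := hs.1
  have hls : Real.log s ≤ 0 := Real.log_nonpos hs0.le (hs.2.trans ht1)
  have hL1 : (1:ℝ) ≤ Real.log (Real.exp 1 / s) := by rw [logE hs0]; linarith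
  have h1 : Real.log (Real.exp 1 / s) ^ (-(3/(2*p))) ≤ 1 :=
    Real.rpow_le_one_of_one_le_of_nonpos hL1 (by simp only [neg_nonpos]; positivity)
  have h0 : (0:ℝ) ≤ Real.log (Real.exp 1 / s) ^ (-(3/(2*p))) :=
    Real.rpow_nonneg (by linarith) _
  rw [Real.norm_eq_abs, abs_of_nonneg (by positivity)]
  exact mul_le_of_le_one_right (Real.rpow_nonneg hs0.le _) h1

lemma part2_upper {p t : ℝ} (hp1 : 1 < p) (ht : 0 < t) (ht1 : t ≤ 1) :
    (1 / t) * (∫ s in Ioc (0:ℝ) t, s ^ (-(1/p)) * Real.log (Real.exp 1 / s) ^ (-(3/(2*p))))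
      ≤ (p/(p-1)) * (1 / (t ^ (1/p) * Real.log (Real.exp 1 / t) ^ (3/(2*p)))) := by
  have hp0 : (0:ℝ) < p := by linarith
  have hlt : Real.log t ≤ 0 := Real.log_nonpos ht.le ht1
  have hLt : (0:ℝ) < 1 - Real.log t := by linarith
  have hexp : (-1 : ℝ) < -(1/p) := by
    have : 1/p < 1 := by rw [div_lt_one hp0]; exact hp1
    linarith
  have hgint : IntegrableOn (fun s : ℝ => s ^ (-(1/p))) (Ioc 0 t) :=
    (intervalIntegral.intervalIntegrable_rpow' hexp).1
  have hmono : (∫ s in Ioc (0:ℝ) t, s ^ (-(1/p)) * Real.log (Real.exp 1 / s) ^ (-(3/(2*p))))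
      ≤ ∫ s in Ioc (0:ℝ) t,
          Real.log (Real.exp 1 / t) ^ (-(3/(2*p))) * s ^ (-(1/p)) := by
    apply setIntegral_mono_on (f2_integrable hp1 ht ht1)
      (hgint.const_mul _) measurableSet_Ioc
    intro s hs
    have hs0 : (0:ℝ) < s := hs.1
    have hls : Real.log s ≤ Real.log t := Real.log_le_log hs0 hs.2
    have h1 : Real.log (Real.exp 1 / t) ≤ Real.log (Real.exp 1 / s) := by
      rw [logE hs0, logE ht]; linarith
    have h2 : Real.log (Real.exp 1 / s) ^ (-(3/(2*p)))
        ≤ Real.log (Real.exp 1 / t) ^ (-(3/(2*p))) := by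
      apply Real.rpow_le_rpow_of_nonpos (by rw [logE ht]; linarith) h1 (by simp only [neg_nonpos]; positivity)
    rw [mul_comm (Real.log (Real.exp 1 / t) ^ (-(3/(2*p))))]
    exact mul_le_mul_of_nonneg_left h2 (Real.rpow_nonneg hs0.le _)
  have hval : (∫ s in Ioc (0:ℝ) t, Real.log (Real.exp 1 / t) ^ (-(3/(2*p))) * s ^ (-(1/p)))
      = Real.log (Real.exp 1 / t) ^ (-(3/(2*p))) * (t ^ (-(1/p)+1) / (-(1/p)+1)) := by
    rw [MeasureTheory.integral_const_mul, ← intervalIntegral.integral_of_le ht.le,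
      integral_rpow (Or.inl hexp), Real.zero_rpow (by linarith), sub_zero]
  rw [logE ht] at *
  have key : (1/t) * ((1 - Real.log t) ^ (-(3/(2*p))) * (t ^ (-(1/p)+1) / (-(1/p)+1)))
      = (p/(p-1)) * (1 / (t ^ (1/p) * (1 - Real.log t) ^ (3/(2*p)))) := by
    have e1 : t ^ (-(1/p)+1) = (t ^ (1/p))⁻¹ * t := by
      rw [Real.rpow_add ht, Real.rpow_one, Real.rpow_neg ht.le]
    have e2 : (1 - Real.log t) ^ (-(3/(2*p))) = ((1 - Real.log t) ^ (3/(2*p)))⁻¹ :=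
      Real.rpow_neg hLt.le _
    have p1 : (0:ℝ) < t ^ (1/p) := Real.rpow_pos_of_pos ht _
    have p2 : (0:ℝ) < (1 - Real.log t) ^ (3/(2*p)) := Real.rpow_pos_of_pos hLt _
    have p3 : -(1/p) + 1 ≠ 0 := by linarith
    rw [e1, e2]
    field_simp
    ring
  calc (1/t) * (∫ s in Ioc (0:ℝ) t, s ^ (-(1/p)) * Real.log (Real.exp 1 / s) ^ (-(3/(2*p))))
      ≤ (1/t) * ((1 - Real.log t) ^ (-(3/(2*p))) * (t ^ (-(1/p)+1) / (-(1/p)+1))) := by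
        rw [← hval]; exact mul_le_mul_of_nonneg_left hmono (by positivity)
    _ = (p/(p-1)) * (1 / (t ^ (1/p) * (1 - Real.log t) ^ (3/(2*p)))) := key

lemma part2_lower {p t : ℝ} (hp1 : 1 < p) (ht : 0 < t) (ht1 : t ≤ 1) :
    (8 : ℝ)⁻¹ * (1 / (t ^ (1/p) * Real.log (Real.exp 1 / t) ^ (3/(2*p))))
      ≤ (1 / t) * (∫ s in Ioc (0:ℝ) t,
          s ^ (-(1/p)) * Real.log (Real.exp 1 / s) ^ (-(3/(2*p)))) := by
  have hp0 : (0:ℝ) < p := by linarith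
  have hlt : Real.log t ≤ 0 := Real.log_nonpos ht.le ht1
  have hLt : (0:ℝ) < 1 - Real.log t := by linarith
  have hA : (0:ℝ) < 3/(2*p) := by positivity
  have hAle : (3:ℝ)/(2*p) ≤ 2 := by
    rw [div_le_iff₀ (by positivity)]; nlinarith
  set c : ℝ := t ^ (-(1/p)) * ((2:ℝ) * (1 - Real.log t)) ^ (-(3/(2*p))) with hc
  have hfnonneg : ∀ s ∈ Ioc (0:ℝ) t,
      0 ≤ s ^ (-(1/p)) * Real.log (Real.exp 1 / s) ^ (-(3/(2*p))) := by
    intro s hs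
    have hs0 : (0:ℝ) < s := hs.1
    have : (0:ℝ) ≤ Real.log (Real.exp 1 / s) := by
      rw [logE hs0]
      have := Real.log_nonpos hs0.le (hs.2.trans ht1); linarith
    positivity
  have hsub : Ioc (t/2) t ⊆ Ioc (0:ℝ) t := Ioc_subset_Ioc_left (by linarith)
  have h1 : c * (volume (Ioc (t/2) t)).toReal
      ≤ ∫ s in Ioc (t/2) t, s ^ (-(1/p)) * Real.log (Real.exp 1 / s) ^ (-(3/(2*p))) := by
    apply setIntegral_ge_of_const_le_real measurableSet_Ioc measure_Ioc_lt_top.ne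
    · intro s hs
      have hs0 : (0:ℝ) < s := lt_trans (by linarith) hs.1
      have hst : s ≤ t := hs.2
      have hls : Real.log s ≤ 0 := Real.log_nonpos hs0.le (hst.trans ht1)
      have h2 : t ^ (-(1/p)) ≤ s ^ (-(1/p)) :=
        Real.rpow_le_rpow_of_nonpos hs0 hst (by simp only [neg_nonpos]; positivity)
      have hlog2 : Real.log 2 ≤ 1 := by
        have := Real.log_le_sub_one_of_pos (by norm_num : (0:ℝ) < 2); linarith
      have hlgs : Real.log (t/2) ≤ Real.log s := Real.log_le_log (by positivity) (le_of_lt hs.1)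
      have hld : Real.log (t/2) = Real.log t - Real.log 2 := Real.log_div ht.ne' two_ne_zero
      have h3 : 1 - Real.log s ≤ 2 * (1 - Real.log t) := by
        rw [hld] at hlgs; linarith
      have h4 : ((2:ℝ) * (1 - Real.log t)) ^ (-(3/(2*p)))
          ≤ (1 - Real.log s) ^ (-(3/(2*p))) := by
        apply Real.rpow_le_rpow_of_nonpos (by linarith) h3 (by simp only [neg_nonpos]; positivity)
      rw [logE hs0]
      exact mul_le_mul h2 h4 (Real.rpow_nonneg (by positivity) _) (Real.rpow_nonneg hs0.le _)
    · exact (f2_integrable hp1 ht ht1).mono_set hsub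
  have hvol : (volume (Ioc (t/2) t)).toReal = t/2 := by
    rw [Real.volume_Ioc, ENNReal.toReal_ofReal (by linarith)]; ring
  have h5 : (∫ s in Ioc (t/2) t, s ^ (-(1/p)) * Real.log (Real.exp 1 / s) ^ (-(3/(2*p))))
      ≤ ∫ s in Ioc (0:ℝ) t, s ^ (-(1/p)) * Real.log (Real.exp 1 / s) ^ (-(3/(2*p))) := by
    apply setIntegral_mono_set (f2_integrable hp1 ht ht1)
    · rw [EventuallyLE, ae_restrict_iff' measurableSet_Ioc]
      exact ae_of_all _ fun s hs => hfnonneg s hs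
    · exact HasSubset.Subset.eventuallyLE hsub
  rw [hvol] at h1
  -- c ≥ 4⁻¹ * (1/(t^(1/p) * Lt^(3/(2p))))
  have hc4 : (4:ℝ)⁻¹ * (1 / (t ^ (1/p) * (1 - Real.log t) ^ (3/(2*p)))) ≤ c := by
    have e1 : ((2:ℝ) * (1 - Real.log t)) ^ (-(3/(2*p)))
        = (2:ℝ) ^ (-(3/(2*p))) * (1 - Real.log t) ^ (-(3/(2*p))) := by
      rw [Real.mul_rpow (by norm_num) hLt.le]
    have h24 : (4:ℝ)⁻¹ ≤ (2:ℝ) ^ (-(3/(2*p))) := by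
      have := Real.rpow_le_rpow_of_exponent_le (by norm_num : (1:ℝ) ≤ 2)
        (by linarith : (-2:ℝ) ≤ -(3/(2*p)))
      have e2 : (2:ℝ) ^ (-2:ℝ) = 4⁻¹ := by
        rw [Real.rpow_neg (by norm_num), show ((2:ℝ) ^ (2:ℝ)) = 4 by
          rw [show (2:ℝ) = ((2:ℕ):ℝ) by norm_num, Real.rpow_natCast]; norm_num]
      rw [← e2]; exact this
    have p1 : (0:ℝ) < t ^ (1/p) := Real.rpow_pos_of_pos ht _
    have p2 : (0:ℝ) < (1 - Real.log t) ^ (3/(2*p)) := Real.rpow_pos_of_pos hLt _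
    have e3 : c = (2:ℝ) ^ (-(3/(2*p))) * (1 / (t ^ (1/p) * (1 - Real.log t) ^ (3/(2*p)))) := by
      rw [hc, e1, Real.rpow_neg ht.le, Real.rpow_neg hLt.le]
      field_simp
    rw [e3]
    gcongr
  have h6 := mul_le_mul_of_nonneg_left (h1.trans h5) (by positivity : (0:ℝ) ≤ 1/t)
  have heq : (1/t) * (c * (t/2)) = c/2 := by field_simp
  rw [heq] at h6
  rw [logE ht]
  linarith

lemma rint_int {q a b : ℝ} (ha : 0 < a) (hab : a ≤ b) :
    IntegrableOn (fun s : ℝ => s ^ q) (Ioc a b) := by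
  have h0 : (0:ℝ) ∉ uIcc a b := by
    rw [Set.uIcc_of_le hab, Set.mem_Icc]
    exact fun h => absurd h.1 (not_le.2 ha)
  exact (intervalIntegral.intervalIntegrable_rpow (Or.inr h0)).1

lemma rint {q a b : ℝ} (hq : q ≠ -1) (ha : 0 < a) (hab : a ≤ b) :
    ∫ s in Ioc a b, s ^ q = (b ^ (q+1) - a ^ (q+1)) / (q+1) := by
  have h0 : (0:ℝ) ∉ uIcc a b := by
    rw [Set.uIcc_of_le hab, Set.mem_Icc]
    exact fun h => absurd h.1 (not_le.2 ha)
  rw [← intervalIntegral.integral_of_le hab, integral_rpow (Or.inr ⟨hq, h0⟩)]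

lemma rint_le {q a b : ℝ} (hq : q < -1) (ha : 0 < a) (hab : a ≤ b) :
    ∫ s in Ioc a b, s ^ q ≤ a ^ (q+1) / (-(q+1)) := by
  rw [rint (by linarith) ha hab]
  have h1 : (0:ℝ) < b := lt_of_lt_of_le ha hab
  have h2 : (0:ℝ) ≤ b ^ (q+1) := Real.rpow_nonneg h1.le _
  have h3 : q + 1 < 0 := by linarith
  have hb : (0:ℝ) < -(q+1) := by linarith
  rw [le_div_iff₀ hb]
  have e : (b ^ (q+1) - a ^ (q+1)) / (q+1) * (-(q+1)) = a ^ (q+1) - b ^ (q+1) := by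
    rw [div_mul_eq_mul_div, div_eq_iff (by linarith : q+1 ≠ (0:ℝ))]
    ring
  rw [e]
  linarith
lemma log_rpow_bound {q δ t : ℝ} (hq : 0 < q) (hδ : 0 < δ) (ht : 0 < t) (ht1 : t ≤ 1) :
    (1 - Real.log t) ^ q * t ^ δ ≤ (q/δ) ^ q * Real.exp 1 ^ δ := by
  have he : (0:ℝ) < Real.exp 1 / t := by positivity
  have hδ' : (0:ℝ) < δ/q := by positivity
  have h1 : 1 - Real.log t = (q/δ) * Real.log ((Real.exp 1 / t) ^ (δ/q)) := by
    rw [Real.log_rpow he, ← logE ht]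
    field_simp
  have h2 : Real.log ((Real.exp 1 / t) ^ (δ/q)) ≤ (Real.exp 1 / t) ^ (δ/q) :=
    Real.log_le_self (Real.rpow_nonneg he.le _)
  have h3 : 1 - Real.log t ≤ (q/δ) * (Real.exp 1 / t) ^ (δ/q) := by
    rw [h1]
    exact mul_le_mul_of_nonneg_left h2 (by positivity)
  have h4 : (0:ℝ) ≤ 1 - Real.log t := by
    have := Real.log_nonpos ht.le ht1; linarith
  have h5 : (1 - Real.log t) ^ q ≤ ((q/δ) * (Real.exp 1 / t) ^ (δ/q)) ^ q :=
    Real.rpow_le_rpow h4 h3 hq.le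
  have h6 : ((q/δ) * (Real.exp 1 / t) ^ (δ/q)) ^ q
      = (q/δ) ^ q * (Real.exp 1 / t) ^ δ := by
    rw [Real.mul_rpow (by positivity) (Real.rpow_nonneg he.le _),
      ← Real.rpow_mul he.le]
    congr 2
    field_simp
  have h7 : (Real.exp 1 / t) ^ δ * t ^ δ = Real.exp 1 ^ δ := by
    rw [Real.div_rpow (Real.exp_pos 1).le ht.le]
    field_simp
  calc (1 - Real.log t) ^ q * t ^ δ
      ≤ (q/δ) ^ q * (Real.exp 1 / t) ^ δ * t ^ δ := by
        rw [← h6]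
        exact mul_le_mul_of_nonneg_right h5 (Real.rpow_nonneg ht.le _)
    _ = (q/δ) ^ q * Real.exp 1 ^ δ := by rw [mul_assoc, h7]

lemma f3_eq {p t : ℝ} (hp1 : 1 < p) (ht : 0 < t) :
    ∫ s in Ioc t (1:ℝ), (s ^ (-(1/p)) * Real.log (Real.exp 1 / s) ^ (-(3/(2*p)))) ^ (2:ℝ)
      = ∫ s in Ioc t (1:ℝ), s ^ (-(2/p)) * (1 - Real.log s) ^ (-(3/p)) := by
  have hp0 : p ≠ 0 := by positivity
  apply setIntegral_congr_fun measurableSet_Ioc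
  intro s hs
  have hs0 : (0:ℝ) < s := lt_trans ht hs.1
  have hls : Real.log s ≤ 0 := Real.log_nonpos hs0.le hs.2
  have hb : (0:ℝ) ≤ 1 - Real.log s := by linarith
  dsimp only
  rw [logE hs0, Real.mul_rpow (Real.rpow_nonneg hs0.le _) (Real.rpow_nonneg hb _),
    ← Real.rpow_mul hs0.le, ← Real.rpow_mul hb]
  have e1 : (-(1/p)) * 2 = -(2/p) := by field_simp
  have e2 : (-(3/(2*p))) * 2 = -(3/p) := by field_simp
  rw [e1, e2]

lemma f3_integrable {p t : ℝ} (ht : 0 < t) (ht1 : t ≤ 1) :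
    IntegrableOn (fun s : ℝ => s ^ (-(2/p)) * (1 - Real.log s) ^ (-(3/p))) (Ioc t 1) := by
  have hcont : ContinuousOn (fun s : ℝ => s ^ (-(2/p)) * (1 - Real.log s) ^ (-(3/p)))
      (Icc t 1) := by
    intro x hx
    have hx0 : (0:ℝ) < x := lt_of_lt_of_le ht hx.1
    have hlx : Real.log x ≤ 0 := Real.log_nonpos hx0.le hx.2
    have hb : (0:ℝ) < 1 - Real.log x := by linarith
    have c1 : ContinuousAt (fun s : ℝ => s ^ (-(2/p))) x :=
      Real.continuousAt_rpow_const _ _ (Or.inl hx0.ne')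
    have c2 : ContinuousAt (fun s : ℝ => (1 - Real.log s) ^ (-(3/p))) x :=
      (continuousAt_const.sub (Real.continuousAt_log hx0.ne')).rpow_const (Or.inl hb.ne')
    exact (c1.mul c2).continuousWithinAt
  exact (hcont.integrableOn_Icc).mono_set Ioc_subset_Icc_self

lemma part3_lower {p t : ℝ} (hp1 : 1 < p) (hp2 : p < 2) (ht : 0 < t) (ht2 : t ≤ 1/2) :
    (4:ℝ)⁻¹ * (1 / (t ^ (2/p) * Real.log (Real.exp 1 / t) ^ (3/p)))
      ≤ (1/t) * ∫ s in Ioc t (1:ℝ), s ^ (-(2/p)) * (1 - Real.log s) ^ (-(3/p)) := by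
  have hp0 : (0:ℝ) < p := by linarith
  have ht1 : t ≤ 1 := by linarith
  have hlt : Real.log t ≤ 0 := Real.log_nonpos ht.le ht1
  have hLt : (0:ℝ) < 1 - Real.log t := by linarith
  have h2t : 2*t ≤ 1 := by linarith
  have hsub : Ioc t (2*t) ⊆ Ioc t 1 := Ioc_subset_Ioc_right h2t
  have hfnonneg : ∀ s ∈ Ioc t (1:ℝ), 0 ≤ s ^ (-(2/p)) * (1 - Real.log s) ^ (-(3/p)) := by
    intro s hs
    have hs0 : (0:ℝ) < s := lt_trans ht hs.1
    have := Real.log_nonpos hs0.le hs.2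
    have hb : (0:ℝ) ≤ 1 - Real.log s := by linarith
    positivity
  set c : ℝ := (2*t) ^ (-(2/p)) * (1 - Real.log t) ^ (-(3/p)) with hc
  have h1 : c * (volume (Ioc t (2*t))).toReal
      ≤ ∫ s in Ioc t (2*t), s ^ (-(2/p)) * (1 - Real.log s) ^ (-(3/p)) := by
    apply setIntegral_ge_of_const_le_real measurableSet_Ioc measure_Ioc_lt_top.ne
    · intro s hs
      have hs0 : (0:ℝ) < s := lt_trans ht hs.1
      have hlss : Real.log s ≤ 0 := Real.log_nonpos hs0.le (hs.2.trans h2t)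
      have h2 : (2*t) ^ (-(2/p)) ≤ s ^ (-(2/p)) :=
        Real.rpow_le_rpow_of_nonpos hs0 hs.2 (by simp only [neg_nonpos]; positivity)
      have hlts : Real.log t ≤ Real.log s := Real.log_le_log ht hs.1.le
      have h3 : (1 - Real.log t) ^ (-(3/p)) ≤ (1 - Real.log s) ^ (-(3/p)) := by
        apply Real.rpow_le_rpow_of_nonpos (by linarith) (by linarith)
          (by simp only [neg_nonpos]; positivity)
      exact mul_le_mul h2 h3 (Real.rpow_nonneg hLt.le _) (Real.rpow_nonneg hs0.le _)
    · exact (f3_integrable ht ht1).mono_set hsub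
  have hvol : (volume (Ioc t (2*t))).toReal = t := by
    rw [Real.volume_Ioc, ENNReal.toReal_ofReal (by linarith)]; ring
  rw [hvol] at h1
  have h5 : (∫ s in Ioc t (2*t), s ^ (-(2/p)) * (1 - Real.log s) ^ (-(3/p)))
      ≤ ∫ s in Ioc t (1:ℝ), s ^ (-(2/p)) * (1 - Real.log s) ^ (-(3/p)) := by
    apply setIntegral_mono_set (f3_integrable ht ht1)
    · rw [EventuallyLE, ae_restrict_iff' measurableSet_Ioc]
      exact ae_of_all _ fun s hs => hfnonneg s hs
    · exact HasSubset.Subset.eventuallyLE hsub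
  have hc4 : (4:ℝ)⁻¹ * (1 / (t ^ (2/p) * (1 - Real.log t) ^ (3/p))) ≤ c := by
    have e1 : (2*t) ^ (-(2/p)) = (2:ℝ) ^ (-(2/p)) * t ^ (-(2/p)) :=
      Real.mul_rpow (by norm_num) ht.le
    have h24 : (4:ℝ)⁻¹ ≤ (2:ℝ) ^ (-(2/p)) := by
      have h2p : (-2:ℝ) ≤ -(2/p) := by
        have : 2/p ≤ 2 := by rw [div_le_iff₀ hp0]; nlinarith
        linarith
      have := Real.rpow_le_rpow_of_exponent_le (by norm_num : (1:ℝ) ≤ 2) h2p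
      have e2 : (2:ℝ) ^ (-2:ℝ) = 4⁻¹ := by
        rw [Real.rpow_neg (by norm_num), show ((2:ℝ) ^ (2:ℝ)) = 4 by
          rw [show (2:ℝ) = ((2:ℕ):ℝ) by norm_num, Real.rpow_natCast]; norm_num]
      rw [← e2]; exact this
    have p1 : (0:ℝ) < t ^ (2/p) := Real.rpow_pos_of_pos ht _
    have p2 : (0:ℝ) < (1 - Real.log t) ^ (3/p) := Real.rpow_pos_of_pos hLt _
    have e3 : c = (2:ℝ) ^ (-(2/p)) * (1 / (t ^ (2/p) * (1 - Real.log t) ^ (3/p))) := by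
      rw [hc, e1, Real.rpow_neg ht.le, Real.rpow_neg hLt.le]
      field_simp
    rw [e3]
    gcongr
  have h6 := mul_le_mul_of_nonneg_left (h1.trans h5) (by positivity : (0:ℝ) ≤ 1/t)
  have heq : (1/t) * (c * t) = c := by field_simp
  rw [heq] at h6
  rw [logE ht]
  linarith

lemma part3_upper {p t : ℝ} (hp1 : 1 < p) (hp2 : p < 2) (ht : 0 < t) (ht2 : t ≤ 1/2) :
    (1/t) * (∫ s in Ioc t (1:ℝ), s ^ (-(2/p)) * (1 - Real.log s) ^ (-(3/p)))
      ≤ ((8 + ((3/p)/((2/p-1)/2)) ^ (3/p) * Real.exp 1 ^ ((2/p-1)/2)) / (2/p - 1))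
        * (1 / (t ^ (2/p) * Real.log (Real.exp 1 / t) ^ (3/p))) := by
  have hp0 : (0:ℝ) < p := by linarith
  have ht1 : t ≤ 1 := by linarith
  have hlt : Real.log t ≤ 0 := Real.log_nonpos ht.le ht1
  have hLt : (0:ℝ) < 1 - Real.log t := by linarith
  have ha1 : (1:ℝ) < 2/p := by rw [lt_div_iff₀ hp0]; linarith
  have hq0 : (0:ℝ) < 3/p := by positivity
  have hq3 : (3:ℝ)/p ≤ 3 := by rw [div_le_iff₀ hp0]; nlinarith
  have hδ0 : (0:ℝ) < (2/p-1)/2 := by linarith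
  set a : ℝ := 2/p with ha_def
  set q : ℝ := 3/p with hq_def
  set δ : ℝ := (2/p-1)/2 with hδ_def
  set K : ℝ := (q/δ) ^ q * Real.exp 1 ^ δ with hK_def
  have hK0 : (0:ℝ) < K := by
    apply mul_pos (Real.rpow_pos_of_pos (by positivity) _)
      (Real.rpow_pos_of_pos (Real.exp_pos 1) _)
  set r : ℝ := t ^ ((1:ℝ)/2) with hr_def
  have hr0 : (0:ℝ) < r := Real.rpow_pos_of_pos ht _
  have htr : t ≤ r := by
    have := Real.rpow_le_rpow_of_exponent_ge ht ht1 (by norm_num : (1:ℝ)/2 ≤ 1)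
    rwa [Real.rpow_one] at this
  have hr1 : r ≤ 1 := Real.rpow_le_one ht.le ht1 (by norm_num)
  have hlogr : Real.log r = (1/2) * Real.log t := Real.log_rpow ht _
  have hIA_int : IntegrableOn (fun s : ℝ => s ^ (-a) * (1 - Real.log s) ^ (-q)) (Ioc t r) :=
    (f3_integrable ht ht1).mono_set (Ioc_subset_Ioc_right hr1)
  have hIB_int : IntegrableOn (fun s : ℝ => s ^ (-a) * (1 - Real.log s) ^ (-q)) (Ioc r 1) :=
    (f3_integrable ht ht1).mono_set (Ioc_subset_Ioc_left htr)
  have hsplit : (∫ s in Ioc t (1:ℝ), s ^ (-a) * (1 - Real.log s) ^ (-q))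
      = (∫ s in Ioc t r, s ^ (-a) * (1 - Real.log s) ^ (-q))
        + ∫ s in Ioc r (1:ℝ), s ^ (-a) * (1 - Real.log s) ^ (-q) := by
    rw [← Ioc_union_Ioc_eq_Ioc htr hr1]
    exact setIntegral_union (Set.Ioc_disjoint_Ioc_of_le le_rfl) measurableSet_Ioc hIA_int hIB_int
  have hain : -a < -1 := by linarith
  -- Piece A
  have hA : (∫ s in Ioc t r, s ^ (-a) * (1 - Real.log s) ^ (-q))
      ≤ (8 * (1 - Real.log t) ^ (-q)) * (t ^ (-a+1) / (-(-a+1))) := by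
    have h8 : ((1/2:ℝ) * (1 - Real.log t)) ^ (-q) ≤ 8 * (1 - Real.log t) ^ (-q) := by
      rw [Real.mul_rpow (by norm_num) hLt.le]
      have e1 : ((1/2:ℝ)) ^ (-q) = (2:ℝ) ^ q := by
        rw [one_div, Real.inv_rpow (by norm_num : (0:ℝ) ≤ 2), ← Real.rpow_neg
          (by norm_num : (0:ℝ) ≤ 2), neg_neg]
      have e2 : (2:ℝ) ^ q ≤ 8 := by
        have := Real.rpow_le_rpow_of_exponent_le (by norm_num : (1:ℝ) ≤ 2) hq3
        rwa [show ((2:ℝ) ^ (3:ℝ)) = 8 by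
          rw [show (3:ℝ) = ((3:ℕ):ℝ) by norm_num, Real.rpow_natCast]; norm_num] at this
      rw [e1]
      exact mul_le_mul_of_nonneg_right e2 (Real.rpow_nonneg hLt.le _)
    have hmono : (∫ s in Ioc t r, s ^ (-a) * (1 - Real.log s) ^ (-q))
        ≤ ∫ s in Ioc t r, (8 * (1 - Real.log t) ^ (-q)) * s ^ (-a) := by
      apply setIntegral_mono_on hIA_int ((rint_int ht htr).const_mul _) measurableSet_Ioc
      intro s hs
      have hs0 : (0:ℝ) < s := lt_trans ht hs.1
      have hlogs : Real.log s ≤ (1/2) * Real.log t := by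
        rw [← hlogr]; exact Real.log_le_log hs0 hs.2
      have hb : (1/2:ℝ) * (1 - Real.log t) ≤ 1 - Real.log s := by linarith
      have h2 : (1 - Real.log s) ^ (-q) ≤ ((1/2:ℝ) * (1 - Real.log t)) ^ (-q) :=
        Real.rpow_le_rpow_of_nonpos (by positivity) hb (by simp only [neg_nonpos]; exact hq0.le)
      calc s ^ (-a) * (1 - Real.log s) ^ (-q)
          ≤ s ^ (-a) * (8 * (1 - Real.log t) ^ (-q)) :=
            mul_le_mul_of_nonneg_left (h2.trans h8) (Real.rpow_nonneg hs0.le _)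
        _ = (8 * (1 - Real.log t) ^ (-q)) * s ^ (-a) := by ring
    have hval : (∫ s in Ioc t r, (8 * (1 - Real.log t) ^ (-q)) * s ^ (-a))
        ≤ (8 * (1 - Real.log t) ^ (-q)) * (t ^ (-a+1) / (-(-a+1))) := by
      rw [MeasureTheory.integral_const_mul]
      exact mul_le_mul_of_nonneg_left (rint_le hain ht htr) (by positivity)
    exact hmono.trans hval
  -- Piece B
  have hB : (∫ s in Ioc r (1:ℝ), s ^ (-a) * (1 - Real.log s) ^ (-q))
      ≤ r ^ (-a+1) / (-(-a+1)) := by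
    have hmono : (∫ s in Ioc r (1:ℝ), s ^ (-a) * (1 - Real.log s) ^ (-q))
        ≤ ∫ s in Ioc r (1:ℝ), s ^ (-a) := by
      apply setIntegral_mono_on hIB_int (rint_int hr0 hr1) measurableSet_Ioc
      intro s hs
      have hs0 : (0:ℝ) < s := lt_of_lt_of_le hr0 hs.1.le
      have hlss : Real.log s ≤ 0 := Real.log_nonpos hs0.le hs.2
      have h1 : (1 - Real.log s) ^ (-q) ≤ 1 :=
        Real.rpow_le_one_of_one_le_of_nonpos (by linarith)
          (by simp only [neg_nonpos]; exact hq0.le)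
      exact mul_le_of_le_one_right (Real.rpow_nonneg hs0.le _) h1
    exact hmono.trans (rint_le hain hr0 hr1)
  -- bound r ^ (-a+1)
  have hrb : r ^ (-a+1) ≤ K * (t ^ (-a+1) * (1 - Real.log t) ^ (-q)) := by
    have e1 : r ^ (-a+1) = t ^ ((1/2) * (-a+1)) := by
      rw [hr_def, ← Real.rpow_mul ht.le]
    have e2 : (1/2 : ℝ) * (-a+1) = (-a+1) + δ := by rw [hδ_def, ha_def]; ring
    have e3 : t ^ ((-a+1) + δ) = t ^ (-a+1) * t ^ δ := Real.rpow_add ht _ _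
    have h4 : t ^ δ ≤ K * (1 - Real.log t) ^ (-q) := by
      have h5 := log_rpow_bound hq0 hδ0 ht ht1
      have h6 : (1 - Real.log t) ^ (-q) * (1 - Real.log t) ^ q = 1 := by
        rw [← Real.rpow_add hLt]; simp
      calc t ^ δ = (1 - Real.log t) ^ (-q) * ((1 - Real.log t) ^ q * t ^ δ) := by
            rw [← mul_assoc, h6, one_mul]
        _ ≤ (1 - Real.log t) ^ (-q) * K := by
            exact mul_le_mul_of_nonneg_left h5 (Real.rpow_nonneg hLt.le _)
        _ = K * (1 - Real.log t) ^ (-q) := by ring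
    calc r ^ (-a+1) = t ^ (-a+1) * t ^ δ := by rw [e1, e2, e3]
      _ ≤ t ^ (-a+1) * (K * (1 - Real.log t) ^ (-q)) :=
          mul_le_mul_of_nonneg_left h4 (Real.rpow_nonneg ht.le _)
      _ = K * (t ^ (-a+1) * (1 - Real.log t) ^ (-q)) := by ring
  -- combine
  have htot : (∫ s in Ioc t (1:ℝ), s ^ (-a) * (1 - Real.log s) ^ (-q))
      ≤ (8 + K) * (t ^ (-a+1) * (1 - Real.log t) ^ (-q)) / (a - 1) := by
    rw [hsplit]
    have hd : -(-a+1) = a - 1 := by ring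
    have hB2 : (∫ s in Ioc r (1:ℝ), s ^ (-a) * (1 - Real.log s) ^ (-q))
        ≤ K * (t ^ (-a+1) * (1 - Real.log t) ^ (-q)) / (a-1) := by
      refine hB.trans ?_
      rw [hd]
      gcongr
    have hA2 : (∫ s in Ioc t r, s ^ (-a) * (1 - Real.log s) ^ (-q))
        ≤ 8 * (1 - Real.log t) ^ (-q) * t ^ (-a+1) / (a-1) := by
      refine hA.trans ?_
      rw [hd, mul_div_assoc]
    calc _ ≤ 8 * (1 - Real.log t) ^ (-q) * t ^ (-a+1) / (a-1)
          + K * (t ^ (-a+1) * (1 - Real.log t) ^ (-q)) / (a-1) := add_le_add hA2 hB2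
      _ = (8 + K) * (t ^ (-a+1) * (1 - Real.log t) ^ (-q)) / (a - 1) := by ring
  -- final arithmetic
  clear_value a q δ K r
  rw [logE ht]
  have p1 : (0:ℝ) < t ^ a := Real.rpow_pos_of_pos ht _
  have p2 : (0:ℝ) < (1 - Real.log t) ^ q := Real.rpow_pos_of_pos hLt _
  have e4 : t ^ (-a+1) = (t ^ a)⁻¹ * t := by
    rw [Real.rpow_add ht, Real.rpow_one, Real.rpow_neg ht.le]
  have e5 : (1 - Real.log t) ^ (-q) = ((1 - Real.log t) ^ q)⁻¹ := Real.rpow_neg hLt.le _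
  have key : (8 + K) * (t ^ (-a+1) * (1 - Real.log t) ^ (-q)) / (a - 1) * (1/t)
      = ((8 + K) / (a - 1)) * (1 / (t ^ a * (1 - Real.log t) ^ q)) := by
    rw [e4, e5, one_div, one_div]
    rw [show (8+K) * ((t^a)⁻¹ * t * ((1-Real.log t)^q)⁻¹)/(a-1) * t⁻¹
        = (t * t⁻¹) * ((8+K)/(a-1) * ((t^a) * ((1-Real.log t)^q))⁻¹) from by
      rw [mul_inv]; ring]
    rw [mul_inv_cancel₀ ht.ne', one_mul]
  calc (1/t) * (∫ s in Ioc t (1:ℝ), s ^ (-a) * (1 - Real.log s) ^ (-q))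
      ≤ (1/t) * ((8 + K) * (t ^ (-a+1) * (1 - Real.log t) ^ (-q)) / (a - 1)) :=
        mul_le_mul_of_nonneg_left htot (by positivity)
    _ = (8 + K) * (t ^ (-a+1) * (1 - Real.log t) ^ (-q)) / (a - 1) * (1/t) := by ring
    _ = ((8 + K) / (a - 1)) * (1 / (t ^ a * (1 - Real.log t) ^ q)) := key

/-- Standard estimates for `f(t) = t^{-1/p} ln^{-3/(2p)}(e/t)`, `1 < p < 2`:
`(1/t)∫₀ᵗ f^p ≍ 1/(t ln^{1/2}(e/t))` and `(1/t)∫₀ᵗ f ≍ 1/(t^{1/p} ln^{3/(2p)}(e/t))`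
on `(0,1]`, and `(1/t)∫ₜ¹ f² ≍ 1/(t^{2/p} ln^{3/p}(e/t))` on `(0,1/2]`, with
equivalence constants depending only on `p`. -/
theorem stmt11 (p : ℝ) (hp1 : 1 < p) (hp2 : p < 2) :
    ∃ C : ℝ, 0 < C ∧
      (∀ t ∈ Ioc (0:ℝ) 1,
        C⁻¹ * (1 / (t * Real.log (Real.exp 1 / t) ^ ((1:ℝ)/2))) ≤
          (1 / t) * (∫ s in Ioc (0:ℝ) t,
            (s ^ (-(1/p)) * Real.log (Real.exp 1 / s) ^ (-(3/(2*p)))) ^ p) ∧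
        (1 / t) * (∫ s in Ioc (0:ℝ) t,
            (s ^ (-(1/p)) * Real.log (Real.exp 1 / s) ^ (-(3/(2*p)))) ^ p) ≤
          C * (1 / (t * Real.log (Real.exp 1 / t) ^ ((1:ℝ)/2)))) ∧
      (∀ t ∈ Ioc (0:ℝ) 1,
        C⁻¹ * (1 / (t ^ (1/p) * Real.log (Real.exp 1 / t) ^ (3/(2*p)))) ≤
          (1 / t) * (∫ s in Ioc (0:ℝ) t,
            s ^ (-(1/p)) * Real.log (Real.exp 1 / s) ^ (-(3/(2*p)))) ∧
        (1 / t) * (∫ s in Ioc (0:ℝ) t,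
            s ^ (-(1/p)) * Real.log (Real.exp 1 / s) ^ (-(3/(2*p)))) ≤
          C * (1 / (t ^ (1/p) * Real.log (Real.exp 1 / t) ^ (3/(2*p))))) ∧
      (∀ t : ℝ, 0 < t → t ≤ 1/2 →
        C⁻¹ * (1 / (t ^ (2/p) * Real.log (Real.exp 1 / t) ^ (3/p))) ≤
          (1 / t) * (∫ s in Ioc t (1:ℝ),
            (s ^ (-(1/p)) * Real.log (Real.exp 1 / s) ^ (-(3/(2*p)))) ^ (2:ℝ)) ∧
        (1 / t) * (∫ s in Ioc t (1:ℝ),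
            (s ^ (-(1/p)) * Real.log (Real.exp 1 / s) ^ (-(3/(2*p)))) ^ (2:ℝ)) ≤
          C * (1 / (t ^ (2/p) * Real.log (Real.exp 1 / t) ^ (3/p)))) := by
  have hp0 : (0:ℝ) < p := by linarith
  set c2 : ℝ := p/(p-1) with hc2_def
  set Cu : ℝ := (8 + ((3/p)/((2/p-1)/2)) ^ (3/p) * Real.exp 1 ^ ((2/p-1)/2)) / (2/p - 1)
    with hCu_def
  have hc2 : 0 < c2 := by
    apply div_pos hp0; linarith
  have ha1 : (1:ℝ) < 2/p := by rw [lt_div_iff₀ hp0]; linarith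
  have hCu : 0 < Cu := by
    apply div_pos _ (by linarith)
    have h1 : (0:ℝ) < ((3/p)/((2/p-1)/2)) ^ (3/p) :=
      Real.rpow_pos_of_pos (div_pos (by positivity) (by linarith)) _
    have h2 : (0:ℝ) < Real.exp 1 ^ ((2/p-1)/2) :=
      Real.rpow_pos_of_pos (Real.exp_pos 1) _
    nlinarith
  set C : ℝ := 8 + c2 + Cu with hC_def
  have hC0 : (0:ℝ) < C := by linarith
  have hC8 : (8:ℝ) ≤ C := by linarith
  have hCinv : C⁻¹ ≤ 8⁻¹ := by
    apply inv_anti₀ (by norm_num) hC8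
  refine ⟨C, hC0, ?_, ?_, ?_⟩
  · -- part 1
    intro t ht
    have ht0 : 0 < t := ht.1
    have ht1 : t ≤ 1 := ht.2
    have hLt : (0:ℝ) < Real.log (Real.exp 1 / t) := by
      rw [logE ht0]
      have := Real.log_nonpos ht0.le ht1; linarith
    have hX : (0:ℝ) < 1 / (t * Real.log (Real.exp 1 / t) ^ ((1:ℝ)/2)) :=
      div_pos one_pos (mul_pos ht0 (Real.rpow_pos_of_pos hLt _))
    have heq := part1 hp1 ht0 ht1
    rw [heq]
    constructor
    · apply mul_le_mul_of_nonneg_right _ hX.le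
      calc C⁻¹ ≤ 8⁻¹ := hCinv
        _ ≤ 2 := by norm_num
    · apply mul_le_mul_of_nonneg_right _ hX.le
      linarith
  · -- part 2
    intro t ht
    have ht0 : 0 < t := ht.1
    have ht1 : t ≤ 1 := ht.2
    have hLt : (0:ℝ) < Real.log (Real.exp 1 / t) := by
      rw [logE ht0]
      have := Real.log_nonpos ht0.le ht1; linarith
    have hX : (0:ℝ) < 1 / (t ^ (1/p) * Real.log (Real.exp 1 / t) ^ (3/(2*p))) :=
      div_pos one_pos (mul_pos (Real.rpow_pos_of_pos ht0 _) (Real.rpow_pos_of_pos hLt _))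
    constructor
    · refine le_trans ?_ (part2_lower hp1 ht0 ht1)
      exact mul_le_mul_of_nonneg_right hCinv hX.le
    · refine (part2_upper hp1 ht0 ht1).trans ?_
      apply mul_le_mul_of_nonneg_right _ hX.le
      rw [← hc2_def]; linarith
  · -- part 3
    intro t ht0 ht2
    have ht1 : t ≤ 1 := by linarith
    have hLt : (0:ℝ) < Real.log (Real.exp 1 / t) := by
      rw [logE ht0]
      have := Real.log_nonpos ht0.le ht1; linarith
    have hX : (0:ℝ) < 1 / (t ^ (2/p) * Real.log (Real.exp 1 / t) ^ (3/p)) :=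
      div_pos one_pos (mul_pos (Real.rpow_pos_of_pos ht0 _) (Real.rpow_pos_of_pos hLt _))
    rw [f3_eq hp1 ht0]
    constructor
    · refine le_trans ?_ (part3_lower hp1 hp2 ht0 ht2)
      apply mul_le_mul_of_nonneg_right _ hX.le
      calc C⁻¹ ≤ 8⁻¹ := hCinv
        _ ≤ 4⁻¹ := by norm_num
    · refine (part3_upper hp1 hp2 ht0 ht2).trans ?_
      apply mul_le_mul_of_nonneg_right _ hX.le
      rw [← hCu_def]; linarith
end
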